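/- Let D = {(ℓ₁, ℓ₂) ∈ (0,∞)² : sinh ℓ₁ sinh ℓ₂ > 1} and let τ be the measure on D with density C/√(sinh²ℓ₁ sinh²ℓ₂ − 1) dℓ₁ dℓ₂. Define T : D → D by T(ℓ₁, ℓ₂) = (ℓ₂, ℓ₃), where ℓ₃ > 0 is determined by sinh ℓ₃ = cosh ℓ₁ / √(sinh²ℓ₁ sinh²ℓ₂ − 1). Then T maps D into D (since sinh ℓ₂ sinh ℓ₃ = cosh ℓ₅ > 1) and the pushforward of τ under T equals τ; that is, τ is invariant under the cyclic rotation of the pentagon's sides. -/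

import Mathlib

open MeasureTheory

/-- The parameter domain `D = {(ℓ₁,ℓ₂) ∈ (0,∞)² : sinh ℓ₁ sinh ℓ₂ > 1}`. -/
def pentDom : Set (ℝ × ℝ) :=
  {p | 0 < p.1 ∧ 0 < p.2 ∧ 1 < Real.sinh p.1 * Real.sinh p.2}

/-- The measure `τ` on `D` with density `C/√(sinh²ℓ₁ sinh²ℓ₂ − 1) dℓ₁ dℓ₂`. -/
noncomputable def pentMeasure (C : ℝ) : Measure (ℝ × ℝ) :=
  (volume.restrict pentDom).withDensity
    (fun p => ENNReal.ofReal
      (C / Real.sqrt (Real.sinh p.1 ^ 2 * Real.sinh p.2 ^ 2 - 1)))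

/-- The rotation `T(ℓ₁,ℓ₂) = (ℓ₂,ℓ₃)` re-parametrizing the pentagon by the next pair
of consecutive sides, where `sinh ℓ₃ = cosh ℓ₁/√(sinh²ℓ₁ sinh²ℓ₂ − 1)`. -/
noncomputable def pentRot (p : ℝ × ℝ) : ℝ × ℝ :=
  (p.2, Real.arsinh
    (Real.cosh p.1 / Real.sqrt (Real.sinh p.1 ^ 2 * Real.sinh p.2 ^ 2 - 1)))

/-! ### Auxiliary definitions and lemmas -/

noncomputable def pentW (a b : ℝ) : ℝ := Real.sqrt (Real.sinh a ^ 2 * Real.sinh b ^ 2 - 1)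

noncomputable def pentG (a b : ℝ) : ℝ := Real.arsinh (Real.cosh a / pentW a b)

lemma pent_q_pos {a b : ℝ} (ha : 0 < a) (hb : 0 < b) (hab : 1 < Real.sinh a * Real.sinh b) :
    0 < Real.sinh a ^ 2 * Real.sinh b ^ 2 - 1 := by
  nlinarith [Real.sinh_pos_iff.2 ha, Real.sinh_pos_iff.2 hb]

lemma pentW_pos {a b : ℝ} (ha : 0 < a) (hb : 0 < b) (hab : 1 < Real.sinh a * Real.sinh b) :
    0 < pentW a b := Real.sqrt_pos.2 (pent_q_pos ha hb hab)

lemma pentW_sq {a b : ℝ} (ha : 0 < a) (hb : 0 < b) (hab : 1 < Real.sinh a * Real.sinh b) :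
    pentW a b ^ 2 = Real.sinh a ^ 2 * Real.sinh b ^ 2 - 1 :=
  Real.sq_sqrt (pent_q_pos ha hb hab).le

lemma sinh_pentG (a b : ℝ) : Real.sinh (pentG a b) = Real.cosh a / pentW a b :=
  Real.sinh_arsinh _

lemma pentG_pos {a b : ℝ} (ha : 0 < a) (hb : 0 < b) (hab : 1 < Real.sinh a * Real.sinh b) :
    0 < pentG a b :=
  Real.arsinh_pos_iff.2 (div_pos (Real.cosh_pos _) (pentW_pos ha hb hab))

lemma cosh_pentG {a b : ℝ} (ha : 0 < a) (hb : 0 < b) (hab : 1 < Real.sinh a * Real.sinh b) :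
    Real.cosh (pentG a b) = Real.sinh a * Real.cosh b / pentW a b := by
  have hW := pentW_pos ha hb hab
  have hsa := Real.sinh_pos_iff.2 ha
  have h1 : Real.cosh (pentG a b) ^ 2 = (Real.sinh a * Real.cosh b / pentW a b) ^ 2 := by
    rw [Real.cosh_sq, sinh_pentG]
    have hw2 := pentW_sq ha hb hab
    have hca := Real.cosh_sq a
    have hcb := Real.cosh_sq b
    field_simp
    nlinarith [hw2, hca, hcb]
  have h2 : 0 < Real.sinh a * Real.cosh b / pentW a b :=
    div_pos (mul_pos hsa (Real.cosh_pos _)) hW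
  nlinarith [Real.cosh_pos (pentG a b), h1, h2]

lemma pent_rot_D {a b : ℝ} (ha : 0 < a) (hb : 0 < b) (hab : 1 < Real.sinh a * Real.sinh b) :
    1 < Real.sinh b * Real.sinh (pentG a b) := by
  have hW := pentW_pos ha hb hab
  have hsb := Real.sinh_pos_iff.2 hb
  rw [sinh_pentG, mul_div_assoc', lt_div_iff₀ hW, one_mul]
  have h2 : pentW a b ^ 2 < (Real.sinh b * Real.cosh a) ^ 2 := by
    rw [pentW_sq ha hb hab]
    nlinarith [Real.cosh_sq a]
  nlinarith [mul_pos hsb (Real.cosh_pos a), hW]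

lemma pentW_next {a b : ℝ} (ha : 0 < a) (hb : 0 < b) (hab : 1 < Real.sinh a * Real.sinh b) :
    Real.sqrt (Real.sinh b ^ 2 * Real.sinh (pentG a b) ^ 2 - 1)
    = Real.cosh b / pentW a b := by
  have hW := pentW_pos ha hb hab
  have h1 : Real.sinh b ^ 2 * Real.sinh (pentG a b) ^ 2 - 1 = (Real.cosh b / pentW a b) ^ 2 := by
    rw [sinh_pentG]
    have hw2 := pentW_sq ha hb hab
    have hca := Real.cosh_sq a
    have hcb := Real.cosh_sq b
    field_simp
    nlinarith [hw2, hca, hcb]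
  rw [h1, Real.sqrt_sq (div_pos (Real.cosh_pos _) hW).le]

/-- Recovering the first coordinate from the rotated pair. -/
lemma pent_recover {a b : ℝ} (ha : 0 < a) (hb : 0 < b)
    (hab : 1 < Real.sinh a * Real.sinh b) :
    Real.cosh (pentG a b) / Real.sqrt (Real.sinh b ^ 2 * Real.sinh (pentG a b) ^ 2 - 1)
      = Real.sinh a := by
  have hW := pentW_pos ha hb hab
  rw [cosh_pentG ha hb hab, pentW_next ha hb hab]
  field_simp

lemma pent_mapsTo : ∀ p ∈ pentDom, pentRot p ∈ pentDom := by
  rintro p ⟨h1, h2, h3⟩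
  exact ⟨h2, pentG_pos h1 h2 h3, pent_rot_D h1 h2 h3⟩

lemma pentRot_snd (p : ℝ × ℝ) : (pentRot p).2 = pentG p.1 p.2 := rfl

lemma pent_injOn : Set.InjOn pentRot pentDom := by
  rintro p ⟨h1, h2, h3⟩ p' ⟨h1', h2', h3'⟩ h
  have hb : p.2 = p'.2 := congrArg Prod.fst h
  have hg : pentG p.1 p.2 = pentG p'.1 p'.2 := congrArg Prod.snd h
  have hs : Real.sinh p.1 = Real.sinh p'.1 := by
    rw [← pent_recover h1 h2 h3, ← pent_recover h1' h2' h3', hg, hb]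
  exact Prod.ext (Real.sinh_injective hs) hb

lemma pent_image : pentRot '' pentDom = pentDom := by
  apply Set.Subset.antisymm
  · rintro _ ⟨p, hp, rfl⟩
    exact pent_mapsTo p hp
  · rintro ⟨a, b⟩ ⟨ha, hb, hab⟩
    have hab' : 1 < Real.sinh b * Real.sinh a := by rwa [mul_comm]
    have hmem : (pentG b a, a) ∈ pentDom := by
      refine ⟨pentG_pos hb ha hab', ha, ?_⟩
      have := pent_rot_D hb ha hab'
      rwa [mul_comm] at this
    refine ⟨(pentG b a, a), hmem, ?_⟩
    have hsnd : (pentRot (pentG b a, a)).2 = b := by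
      rw [pentRot_snd]
      show Real.arsinh (Real.cosh (pentG b a) / pentW (pentG b a) a) = b
      have hWc : pentW (pentG b a) a
          = Real.sqrt (Real.sinh a ^ 2 * Real.sinh (pentG b a) ^ 2 - 1) := by
        unfold pentW; ring_nf
      rw [hWc, pent_recover hb ha hab', Real.arsinh_sinh]
    exact Prod.ext rfl hsnd

/-- determinant of a map `(v₁,v₂) ↦ (v₂, M v)` -/
lemma pent_det_snd_prod (M : ℝ × ℝ →L[ℝ] ℝ) :
    ((ContinuousLinearMap.snd ℝ ℝ ℝ).prod M).det = -(M (1, 0)) := by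
  have h : ((ContinuousLinearMap.snd ℝ ℝ ℝ).prod M).det
      = LinearMap.det (((ContinuousLinearMap.snd ℝ ℝ ℝ).prod M) : ℝ × ℝ →ₗ[ℝ] ℝ × ℝ) := rfl
  rw [h, ← LinearMap.det_toMatrix (Module.Basis.finTwoProd ℝ), Matrix.det_fin_two]
  simp [LinearMap.toMatrix_apply, Module.Basis.finTwoProd_zero, Module.Basis.finTwoProd_one]

noncomputable def pentM (p : ℝ × ℝ) : ℝ × ℝ →L[ℝ] ℝ :=
  (-(Real.cosh p.2 / (Real.sinh p.1 ^ 2 * Real.sinh p.2 ^ 2 - 1))) • ContinuousLinearMap.fst ℝ ℝ ℝ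
  + (-(Real.cosh p.1 * Real.sinh p.1 * Real.sinh p.2 /
      (Real.sinh p.1 ^ 2 * Real.sinh p.2 ^ 2 - 1))) • ContinuousLinearMap.snd ℝ ℝ ℝ

noncomputable def pentD (p : ℝ × ℝ) : ℝ × ℝ →L[ℝ] ℝ × ℝ :=
  (ContinuousLinearMap.snd ℝ ℝ ℝ).prod (pentM p)

lemma pentD_det (p : ℝ × ℝ) :
    (pentD p).det = Real.cosh p.2 / (Real.sinh p.1 ^ 2 * Real.sinh p.2 ^ 2 - 1) := by
  rw [pentD, pent_det_snd_prod]
  simp [pentM]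

lemma pent_hasFDerivAt {p : ℝ × ℝ} (hp : p ∈ pentDom) :
    HasFDerivAt pentRot (pentD p) p := by
  obtain ⟨h1, h2, h3⟩ := hp
  have hs1p := Real.sinh_pos_iff.2 h1
  have hs2p := Real.sinh_pos_iff.2 h2
  have hq : (0:ℝ) < Real.sinh p.1 ^ 2 * Real.sinh p.2 ^ 2 - 1 := by nlinarith
  have hW : (0:ℝ) < Real.sqrt (Real.sinh p.1 ^ 2 * Real.sinh p.2 ^ 2 - 1) := Real.sqrt_pos.2 hq
  have hWsq : Real.sqrt (Real.sinh p.1 ^ 2 * Real.sinh p.2 ^ 2 - 1) ^ 2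
      = Real.sinh p.1 ^ 2 * Real.sinh p.2 ^ 2 - 1 := Real.sq_sqrt hq.le
  have hone : Real.sqrt (1 + (Real.cosh p.1 *
        (Real.sqrt (Real.sinh p.1 ^ 2 * Real.sinh p.2 ^ 2 - 1))⁻¹) ^ 2)
      = Real.sinh p.1 * Real.cosh p.2 / Real.sqrt (Real.sinh p.1 ^ 2 * Real.sinh p.2 ^ 2 - 1) := by
    have h1' : 1 + (Real.cosh p.1 *
        (Real.sqrt (Real.sinh p.1 ^ 2 * Real.sinh p.2 ^ 2 - 1))⁻¹) ^ 2
        = (Real.sinh p.1 * Real.cosh p.2 /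
            Real.sqrt (Real.sinh p.1 ^ 2 * Real.sinh p.2 ^ 2 - 1)) ^ 2 := by
      have hca := Real.cosh_sq p.1
      have hcb := Real.cosh_sq p.2
      field_simp
      nlinarith [hWsq]
    rw [h1', Real.sqrt_sq (by positivity)]
  have hs1 : HasFDerivAt (fun q : ℝ × ℝ => Real.sinh q.1)
      (Real.cosh p.1 • ContinuousLinearMap.fst ℝ ℝ ℝ) p := hasFDerivAt_fst.sinh
  have hs2 : HasFDerivAt (fun q : ℝ × ℝ => Real.sinh q.2)
      (Real.cosh p.2 • ContinuousLinearMap.snd ℝ ℝ ℝ) p := hasFDerivAt_snd.sinh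
  have hs1sq := (hasDerivAt_pow 2 (Real.sinh p.1)).comp_hasFDerivAt p hs1
  have hs2sq := (hasDerivAt_pow 2 (Real.sinh p.2)).comp_hasFDerivAt p hs2
  have hqd := ((hs1sq.mul hs2sq).sub_const 1)
  have hw := hqd.sqrt (by simpa [Function.comp] using ne_of_gt hq)
  have hinv := (hasDerivAt_inv (x := Real.sqrt (Real.sinh p.1 ^ 2 * Real.sinh p.2 ^ 2 - 1))
      (ne_of_gt hW)).comp_hasFDerivAt_of_eq p hw (by simp [Function.comp])
  have hc1 : HasFDerivAt (fun q : ℝ × ℝ => Real.cosh q.1)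
      (Real.sinh p.1 • ContinuousLinearMap.fst ℝ ℝ ℝ) p := hasFDerivAt_fst.cosh
  have hh := hc1.mul hinv
  have hg := hh.arsinh
  have hrot := HasFDerivAt.prodMk hasFDerivAt_snd hg
  have hfun : pentRot = (fun x : ℝ × ℝ =>
      (x.2, Real.arsinh (Real.cosh x.1 *
        ((fun y => y⁻¹) ∘ fun y : ℝ × ℝ =>
          Real.sqrt (((fun x => x ^ 2) ∘ fun q : ℝ × ℝ => Real.sinh q.1) y *
            ((fun x => x ^ 2) ∘ fun q : ℝ × ℝ => Real.sinh q.2) y - 1)) x))) := by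
    funext q
    simp [pentRot, div_eq_mul_inv, Function.comp]
  rw [hfun]
  refine hrot.congr_fderiv ?_
  symm
  refine ContinuousLinearMap.ext fun v => ?_
  simp only [pentD, pentM, ContinuousLinearMap.prod_apply, ContinuousLinearMap.add_apply,
    ContinuousLinearMap.smul_apply, ContinuousLinearMap.coe_fst', ContinuousLinearMap.coe_snd',
    Function.comp, smul_eq_mul, pow_one, Nat.cast_ofNat]
  refine Prod.ext rfl ?_
  simp only [Function.comp_apply, Pi.mul_apply, pow_one]
  rw [hone]
  have hc2 : Real.cosh p.2 ≠ 0 := ne_of_gt (Real.cosh_pos _)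
  field_simp
  linear_combination (Real.cosh p.2 * Real.sinh p.1 * (-(Real.cosh p.2 * v.1)
      - Real.sinh p.1 * Real.sinh p.2 * Real.cosh p.1 * v.2)
      - (Real.sinh p.1 ^ 2 * Real.sinh p.2 ^ 2 - 1) * Real.sinh p.1 * v.1) * hWsq
    - ((Real.sinh p.1 ^ 2 * Real.sinh p.2 ^ 2 - 1) * Real.sinh p.1 * v.1) * (Real.cosh_sq p.2)
    + ((Real.sinh p.1 ^ 2 * Real.sinh p.2 ^ 2 - 1) * Real.sinh p.1 * v.1 * Real.sinh p.2 ^ 2) *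
      (Real.cosh_sq p.1)

lemma pentDom_isOpen : IsOpen pentDom := by
  have h1 : IsOpen {p : ℝ × ℝ | 0 < p.1} := isOpen_lt continuous_const continuous_fst
  have h2 : IsOpen {p : ℝ × ℝ | 0 < p.2} := isOpen_lt continuous_const continuous_snd
  have h3 : IsOpen {p : ℝ × ℝ | 1 < Real.sinh p.1 * Real.sinh p.2} :=
    isOpen_lt continuous_const
      ((Real.continuous_sinh.comp continuous_fst).mul (Real.continuous_sinh.comp continuous_snd))
  exact (h1.inter (h2.inter h3) : _)

lemma pent_measurable : Measurable pentRot := by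
  have hq : Measurable fun p : ℝ × ℝ => Real.sinh p.1 ^ 2 * Real.sinh p.2 ^ 2 - 1 := by
    fun_prop
  exact measurable_snd.prodMk (Real.continuous_arsinh.measurable.comp
    ((Real.continuous_cosh.measurable.comp measurable_fst).div
      (Real.continuous_sqrt.measurable.comp hq)))

/-- The key density transformation identity. -/
lemma pent_density {x : ℝ × ℝ} (hx : x ∈ pentDom) (C : ℝ) (hC : 0 < C) :
    ENNReal.ofReal |(pentD x).det| *
      ENNReal.ofReal (C / Real.sqrt (Real.sinh (pentRot x).1 ^ 2 *
        Real.sinh (pentRot x).2 ^ 2 - 1))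
    = ENNReal.ofReal (C / Real.sqrt (Real.sinh x.1 ^ 2 * Real.sinh x.2 ^ 2 - 1)) := by
  obtain ⟨h1, h2, h3⟩ := hx
  have hq := pent_q_pos h1 h2 h3
  have hW := pentW_pos h1 h2 h3
  have hWsq := pentW_sq h1 h2 h3
  have hdet : (pentD x).det = Real.cosh x.2 / (Real.sinh x.1 ^ 2 * Real.sinh x.2 ^ 2 - 1) :=
    pentD_det x
  have hdet_pos : 0 < (pentD x).det := by
    rw [hdet]; exact div_pos (Real.cosh_pos _) hq
  have hr1 : (pentRot x).1 = x.2 := rfl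
  have hr2 : (pentRot x).2 = pentG x.1 x.2 := rfl
  rw [hr1, hr2, pentW_next h1 h2 h3, abs_of_pos hdet_pos, hdet,
    ← ENNReal.ofReal_mul (le_of_lt (div_pos (Real.cosh_pos _) hq))]
  congr 1
  have hc2 : Real.cosh x.2 ≠ 0 := ne_of_gt (Real.cosh_pos _)
  rw [show Real.sqrt (Real.sinh x.1 ^ 2 * Real.sinh x.2 ^ 2 - 1) = pentW x.1 x.2 from rfl]
  have hWne := ne_of_gt hW
  have hqne := ne_of_gt hq
  field_simp
  linear_combination hWsq

/-- `T` maps `D` into `D` and the pushforward of `τ` under `T` equals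
`τ`: the measure `τ` is invariant under the cyclic rotation of the pentagon's sides. -/
theorem stmt13 (C : ℝ) (hC : 0 < C) :
    (∀ p ∈ pentDom, pentRot p ∈ pentDom) ∧
    Measure.map pentRot (pentMeasure C) = pentMeasure C := by
  refine ⟨pent_mapsTo, ?_⟩
  have hDm : MeasurableSet pentDom := pentDom_isOpen.measurableSet
  have hmeas := pent_measurable
  ext A hA
  rw [Measure.map_apply hmeas hA]
  unfold pentMeasure
  rw [withDensity_apply _ (hmeas hA), withDensity_apply _ hA,
    Measure.restrict_restrict (hmeas hA), Measure.restrict_restrict hA]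
  set s : Set (ℝ × ℝ) := pentRot ⁻¹' A ∩ pentDom with hs_def
  have hs : MeasurableSet s := (hmeas hA).inter hDm
  have himg : pentRot '' s = A ∩ pentDom := by
    rw [hs_def, Set.image_preimage_inter, pent_image]
  have hf' : ∀ x ∈ s, HasFDerivWithinAt pentRot (pentD x) s x :=
    fun x hx => (pent_hasFDerivAt hx.2).hasFDerivWithinAt
  have hinj : Set.InjOn pentRot s := pent_injOn.mono Set.inter_subset_right
  rw [← himg,
    lintegral_image_eq_lintegral_abs_det_fderiv_mul volume hs hf' hinj]
  refine setLIntegral_congr_fun hs (fun x hx => ?_)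
  exact (pent_density hx.2 C hC).symm
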